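/- arXiv:1611.01276 — 3 statements merged into one kernel-verified Lean document; each statement's English description precedes it below -/
import Mathlib

section
/- Let d, k, M be positive integers and let p ∈ [0,1]. Let i* ∈ {1,…,d}. On a probability space, let S_1, …, S_M be mutually independent random subsets of {1,…,d}, each almost surely of cardinality at most k, and suppose P(i* ∈ S_m) ≥ p for every m ∈ {1,…,M}. For each index j define the (random) vote count V(j) = #{m ∈ {1,…,M} : j ∈ S_m}. Then the probability that at most 2k−1 indices j satisfy V(j) > V(i*) (i.e., that i* is among the 2k indices with largest vote counts) is at least B(M, ⌊M/2⌋+1, p) = Σ_{m=⌊M/2⌋+1}^{M} (M choose m) p^m (1−p)^{M−m}. -/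
open scoped Classical

open MeasureTheory

section Aux

variable {M : ℕ}

/-- weight of a configuration -/
noncomputable def pvW (r : Fin M → ℝ) (T : Finset (Fin M)) : ℝ :=
  (∏ j ∈ T, r j) * ∏ j ∈ Tᶜ, (1 - r j)

/-- probability that at least `t` of the independent events occur -/
noncomputable def pvF (t : ℕ) (r : Fin M → ℝ) : ℝ :=
  ∑ T ∈ Finset.univ.filter (fun T : Finset (Fin M) => t ≤ T.card), pvW r T

lemma pvW_nonneg {r : Fin M → ℝ} (h0 : ∀ i, 0 ≤ r i) (h1 : ∀ i, r i ≤ 1)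
    (T : Finset (Fin M)) : 0 ≤ pvW r T := by
  refine mul_nonneg (Finset.prod_nonneg fun j _ => h0 j)
    (Finset.prod_nonneg fun j _ => by linarith [h1 j])

lemma pvF_update (t : ℕ) (r : Fin M → ℝ) (m : Fin M) (x : ℝ) :
    pvF t (Function.update r m x) =
      x * (∑ T ∈ Finset.univ.filter
            (fun T : Finset (Fin M) => t ≤ T.card ∧ m ∈ T),
            (∏ j ∈ T.erase m, r j) * ∏ j ∈ Tᶜ, (1 - r j))
      + (1 - x) * (∑ T ∈ Finset.univ.filter
            (fun T : Finset (Fin M) => t ≤ T.card ∧ m ∉ T),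
            (∏ j ∈ T, r j) * ∏ j ∈ Tᶜ.erase m, (1 - r j)) := by
  classical
  rw [pvF, ← Finset.sum_filter_add_sum_filter_not
    (Finset.univ.filter (fun T : Finset (Fin M) => t ≤ T.card)) (fun T => m ∈ T)]
  rw [Finset.filter_filter, Finset.filter_filter, Finset.mul_sum, Finset.mul_sum]
  congr 1
  · refine Finset.sum_congr rfl fun T hT => ?_
    simp only [Finset.mem_filter] at hT
    have hmT : m ∈ T := hT.2.2
    have hmTc : m ∉ Tᶜ := by simp [hmT]
    rw [pvW]
    have h1 : ∏ j ∈ T, Function.update r m x j = x * ∏ j ∈ T.erase m, r j := by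
      rw [← Finset.mul_prod_erase T _ hmT, Function.update_self]
      congr 1
      exact Finset.prod_congr rfl fun j hj =>
        Function.update_of_ne (Finset.ne_of_mem_erase hj) _ _
    have h2 : ∏ j ∈ Tᶜ, (1 - Function.update r m x j) = ∏ j ∈ Tᶜ, (1 - r j) :=
      Finset.prod_congr rfl fun j hj => by
        rw [Function.update_of_ne (by rintro rfl; exact hmTc hj) _ _]
    rw [h1, h2]; ring
  · refine Finset.sum_congr rfl fun T hT => ?_
    simp only [Finset.mem_filter] at hT
    have hmT : m ∉ T := hT.2.2
    have hmTc : m ∈ Tᶜ := by simp [hmT]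
    rw [pvW]
    have h1 : ∏ j ∈ T, Function.update r m x j = ∏ j ∈ T, r j :=
      Finset.prod_congr rfl fun j hj =>
        Function.update_of_ne (by rintro rfl; exact hmT hj) _ _
    have h2 : ∏ j ∈ Tᶜ, (1 - Function.update r m x j)
        = (1 - x) * ∏ j ∈ Tᶜ.erase m, (1 - r j) := by
      rw [← Finset.mul_prod_erase Tᶜ _ hmTc, Function.update_self]
      congr 1
      exact Finset.prod_congr rfl fun j hj => by
        rw [Function.update_of_ne (Finset.ne_of_mem_erase hj) _ _]
    rw [h1, h2]; ring

lemma pvF_update_mono (t : ℕ) (r : Fin M → ℝ) (hr0 : ∀ i, 0 ≤ r i) (hr1 : ∀ i, r i ≤ 1)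
    (m : Fin M) {a b : ℝ} (ha : 0 ≤ a) (hab : a ≤ b) (hb : b ≤ 1) :
    pvF t (Function.update r m a) ≤ pvF t (Function.update r m b) := by
  classical
  rw [pvF_update, pvF_update]
  set A := ∑ T ∈ Finset.univ.filter
      (fun T : Finset (Fin M) => t ≤ T.card ∧ m ∈ T),
      (∏ j ∈ T.erase m, r j) * ∏ j ∈ Tᶜ, (1 - r j) with hA
  set B := ∑ T ∈ Finset.univ.filter
      (fun T : Finset (Fin M) => t ≤ T.card ∧ m ∉ T),
      (∏ j ∈ T, r j) * ∏ j ∈ Tᶜ.erase m, (1 - r j) with hB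
  have hterm : ∀ T : Finset (Fin M),
      0 ≤ (∏ j ∈ T.erase m, r j) * ∏ j ∈ Tᶜ, (1 - r j) := fun T =>
    mul_nonneg (Finset.prod_nonneg fun j _ => hr0 j)
      (Finset.prod_nonneg fun j _ => by linarith [hr1 j])
  have hBA : B ≤ A := by
    have himg : B = ∑ T ∈ (Finset.univ.filter
        (fun T : Finset (Fin M) => t ≤ T.card ∧ m ∉ T)).image (insert m),
        (∏ j ∈ T.erase m, r j) * ∏ j ∈ Tᶜ, (1 - r j) := by
      rw [Finset.sum_image]
      · refine Finset.sum_congr rfl fun T hT => ?_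
        simp only [Finset.mem_filter] at hT
        rw [Finset.erase_insert hT.2.2, Finset.compl_insert]
      · intro x hx y hy hxy
        simp only [Finset.mem_coe, Finset.mem_filter] at hx hy
        have := congrArg (fun s => Finset.erase s m) hxy
        simpa [Finset.erase_insert hx.2.2, Finset.erase_insert hy.2.2] using this
    rw [himg]
    refine Finset.sum_le_sum_of_subset_of_nonneg ?_ (fun T _ _ => hterm T)
    intro T hT
    simp only [Finset.mem_image, Finset.mem_filter] at hT ⊢
    obtain ⟨T', ⟨-, ht', hm'⟩, rfl⟩ := hT
    refine ⟨Finset.mem_univ _, le_trans ht' ?_, Finset.mem_insert_self _ _⟩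
    exact Finset.card_le_card (Finset.subset_insert _ _)
  nlinarith [mul_nonneg (sub_nonneg.2 hab) (sub_nonneg.2 hBA)]

lemma pvF_const_le (t : ℕ) (p : ℝ) (hp0 : 0 ≤ p) (q : Fin M → ℝ)
    (hpq : ∀ i, p ≤ q i) (hq1 : ∀ i, q i ≤ 1) :
    pvF t (fun _ : Fin M => p) ≤ pvF t q := by
  classical
  have key : ∀ s : Finset (Fin M),
      pvF t (fun _ : Fin M => p) ≤ pvF t (fun m => if m ∈ s then q m else p) := by
    intro s
    induction s using Finset.induction_on with
    | empty => simp
    | @insert a s ha ih =>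
      set base : Fin M → ℝ := fun m => if m ∈ s then q m else p with hbase
      have hb0 : ∀ i, 0 ≤ base i := by
        intro i; simp only [hbase]; split
        · linarith [hpq i]
        · exact hp0
      have hb1 : ∀ i, base i ≤ 1 := by
        intro i; simp only [hbase]; split
        · exact hq1 i
        · linarith [hpq i, hq1 i]
      have e1 : (fun m => if m ∈ insert a s then q m else p)
          = Function.update base a (q a) := by
        funext m
        by_cases hm : m = a
        · subst hm; simp [hbase, Function.update_self]
        · simp [Function.update_of_ne hm, hbase, Finset.mem_insert, hm]
      have e2 : base = Function.update base a p := by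
        funext m
        by_cases hm : m = a
        · subst hm; simp [Function.update_self, hbase, ha]
        · simp [Function.update_of_ne hm]
      calc pvF t (fun _ : Fin M => p) ≤ pvF t base := ih
        _ = pvF t (Function.update base a p) := by rw [← e2]
        _ ≤ pvF t (Function.update base a (q a)) :=
            pvF_update_mono t base hb0 hb1 a hp0 (hpq a) (hq1 a)
        _ = pvF t (fun m => if m ∈ insert a s then q m else p) := by rw [e1]
  have := key Finset.univ
  simpa using this

lemma pvF_const (t : ℕ) (p : ℝ) :
    pvF t (fun _ : Fin M => p)
      = ∑ m ∈ Finset.Icc t M, (M.choose m : ℝ) * p ^ m * (1 - p) ^ (M - m) := by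
  classical
  have hW : ∀ T : Finset (Fin M),
      pvW (fun _ => p) T = p ^ T.card * (1 - p) ^ (M - T.card) := by
    intro T
    rw [pvW, Finset.prod_const, Finset.prod_const, Finset.card_compl,
      Fintype.card_fin]
  rw [pvF]
  have hfil : Finset.univ.filter (fun T : Finset (Fin M) => t ≤ T.card)
      = Finset.univ.filter (fun T : Finset (Fin M) => T.card ∈ Finset.Icc t M) := by
    refine Finset.filter_congr fun T _ => ?_
    simp only [Finset.mem_Icc]
    constructor
    · intro h; exact ⟨h, by simpa using Finset.card_le_card (Finset.subset_univ T)⟩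
    · exact fun h => h.1
  rw [hfil, ← Finset.sum_fiberwise_eq_sum_filter Finset.univ (Finset.Icc t M)
    (fun T : Finset (Fin M) => T.card) (pvW (fun _ => p))]
  refine Finset.sum_congr rfl fun n hn => ?_
  have hfib : Finset.univ.filter (fun T : Finset (Fin M) => T.card = n)
      = Finset.powersetCard n Finset.univ := by
    rw [Finset.powersetCard_eq_filter, Finset.powerset_univ]
  rw [Finset.sum_congr rfl (fun T hT => by
      simp only [Finset.mem_filter] at hT
      rw [hW, hT.2]),
    Finset.sum_const, hfib, Finset.card_powersetCard, Finset.card_univ,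
    Fintype.card_fin, nsmul_eq_mul]
  ring

/-- deterministic counting lemma -/
lemma pv_count_lemma {d k : ℕ} (hk : 0 < k) (istar : Fin d) (s : Fin M → Finset (Fin d))
    (hcard : ∀ m, (s m).card ≤ k)
    (hV : M / 2 + 1 ≤ (Finset.univ.filter (fun m : Fin M => istar ∈ s m)).card) :
    (Finset.univ.filter (fun j : Fin d =>
        (Finset.univ.filter (fun m : Fin M => istar ∈ s m)).card
          < (Finset.univ.filter (fun m : Fin M => j ∈ s m)).card)).card ≤ 2 * k - 1 := by
  classical
  set V : Fin d → ℕ := fun j => (Finset.univ.filter (fun m : Fin M => j ∈ s m)).card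
    with hVdef
  set J := Finset.univ.filter (fun j : Fin d => V istar < V j) with hJ
  have hsum : ∑ j : Fin d, V j = ∑ m : Fin M, (s m).card := by
    simp only [hVdef, Finset.card_filter]
    rw [Finset.sum_comm]
    refine Finset.sum_congr rfl fun m _ => ?_
    rw [← Finset.card_filter]
    congr 1
    ext j
    simp
  have htot : ∑ j : Fin d, V j ≤ M * k := by
    rw [hsum]
    calc ∑ m : Fin M, (s m).card ≤ ∑ _m : Fin M, k :=
          Finset.sum_le_sum fun m _ => hcard m
      _ = M * k := by simp [mul_comm]
  have hVi : M / 2 + 1 ≤ V istar := by simpa [hVdef] using hV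
  have hJsum : J.card * (M / 2 + 1) ≤ ∑ j ∈ J, V j := by
    have := Finset.card_nsmul_le_sum J V (M / 2 + 1) (fun j hj => by
      simp only [hJ, Finset.mem_filter] at hj
      omega)
    simpa [smul_eq_mul] using this
  have hJle : ∑ j ∈ J, V j ≤ ∑ j : Fin d, V j :=
    Finset.sum_le_sum_of_subset_of_nonneg (Finset.subset_univ J)
      (fun _ _ _ => Nat.zero_le _)
  by_contra hcon
  have h2k : 2 * k ≤ J.card := by omega
  have hfin : k * M + k ≤ k * M := by
    calc k * M + k = k * (M + 1) := by ring
      _ ≤ k * (2 * (M / 2 + 1)) := Nat.mul_le_mul_left _ (by omega)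
      _ = (2 * k) * (M / 2 + 1) := by ring
      _ ≤ J.card * (M / 2 + 1) := Nat.mul_le_mul_right _ h2k
      _ ≤ ∑ j ∈ J, V j := hJsum
      _ ≤ M * k := le_trans hJle htot
      _ = k * M := by ring
  omega

end Aux

/-- **Theorem 1 of the PV-Tree paper (probabilistic skeleton of global voting).**
Let `S 1, …, S M` be mutually independent random subsets of `{1,…,d}`, each
almost surely of cardinality at most `k`, with `P(i* ∈ S m) ≥ p` for every `m`.
With vote counts `V j = #{m : j ∈ S m}`, the probability that at most `2k − 1`
indices `j` satisfy `V j > V i*` (i.e. that `i*` is among the `2k` indices with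
largest vote counts) is at least the binomial tail
`B(M, ⌊M/2⌋+1, p) = Σ_{m=⌊M/2⌋+1}^{M} (M choose m) p^m (1−p)^{M−m}`. -/
theorem pvtree_global_voting_probability_bound
    {Ω : Type*} [MeasurableSpace Ω] (P : Measure Ω) [IsProbabilityMeasure P]
    (d k M : ℕ) (hd : 0 < d) (hk : 0 < k) (hM : 0 < M)
    (p : ℝ) (hp0 : 0 ≤ p) (hp1 : p ≤ 1)
    (istar : Fin d)
    (S : Fin M → Ω → Finset (Fin d))
    (hmeas : ∀ m, @Measurable Ω (Finset (Fin d)) _ ⊤ (S m))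
    (hindep : ProbabilityTheory.iIndepFun
      (m := fun _ : Fin M => (⊤ : MeasurableSpace (Finset (Fin d)))) S P)
    (hcard : ∀ m, ∀ᵐ ω ∂P, (S m ω).card ≤ k)
    (hp : ∀ m, p ≤ (P {ω | istar ∈ S m ω}).toReal) :
    ∑ m ∈ Finset.Icc (M / 2 + 1) M, (M.choose m : ℝ) * p ^ m * (1 - p) ^ (M - m)
      ≤ (P {ω |
          (Finset.univ.filter (fun j : Fin d =>
              (Finset.univ.filter (fun m : Fin M => istar ∈ S m ω)).card
                < (Finset.univ.filter (fun m : Fin M => j ∈ S m ω)).card)).card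
            ≤ 2 * k - 1}).toReal := by
  classical
  set t := M / 2 + 1 with ht
  set A : Fin M → Set Ω := fun m => {ω | istar ∈ S m ω} with hA
  have hAmeas : ∀ m, MeasurableSet (A m) := by
    intro m
    simp only [hA]
    exact hmeas m (MeasurableSpace.measurableSet_top (s := {x : Finset (Fin d) | istar ∈ x}))
  set q : Fin M → ℝ := fun m => (P (A m)).toReal with hq
  have hq1 : ∀ m, q m ≤ 1 := by
    intro m
    simp only [hq]
    simpa using ENNReal.toReal_mono ENNReal.one_ne_top prob_le_one
  have hpq : ∀ m, p ≤ q m := by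
    intro m
    simp only [hq, hA]
    exact hp m
  -- the elementary events
  set E : Finset (Fin M) → Set Ω := fun T =>
    {ω | Finset.univ.filter (fun m => istar ∈ S m ω) = T} with hE
  have hE_inter : ∀ T, E T = ⋂ m, (if m ∈ T then A m else (A m)ᶜ) := by
    intro T
    ext ω
    simp only [hE, hA, Set.mem_setOf_eq, Set.mem_iInter]
    constructor
    · intro hfe m
      have hmem : istar ∈ S m ω ↔ m ∈ T := by
        rw [← hfe]; simp
      by_cases hm : m ∈ T
      · simp only [hm, if_true, Set.mem_setOf_eq]; exact hmem.2 hm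
      · simp only [hm, if_false, Set.mem_compl_iff, Set.mem_setOf_eq]
        exact fun hcon => hm (hmem.1 hcon)
    · intro h
      ext m
      simp only [Finset.mem_filter, Finset.mem_univ, true_and]
      have := h m
      by_cases hm : m ∈ T
      · simp only [hm, if_true, Set.mem_setOf_eq] at this
        exact ⟨fun _ => hm, fun _ => this⟩
      · simp only [hm, if_false, Set.mem_compl_iff, Set.mem_setOf_eq] at this
        exact ⟨fun hcon => absurd hcon this, fun hcon => absurd hcon hm⟩
  have hEmeas : ∀ T, MeasurableSet (E T) := by
    intro T
    rw [hE_inter]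
    refine MeasurableSet.iInter fun m => ?_
    by_cases hm : m ∈ T
    · simpa [hm] using hAmeas m
    · simpa [hm] using (hAmeas m).compl
  have hPE : ∀ T, P (E T) = ∏ m, P (if m ∈ T then A m else (A m)ᶜ) := by
    intro T
    rw [hE_inter]
    refine hindep.meas_iInter fun m => ?_
    refine ⟨if m ∈ T then {x : Finset (Fin d) | istar ∈ x}
      else {x : Finset (Fin d) | istar ∈ x}ᶜ, trivial, ?_⟩
    by_cases hm : m ∈ T
    · simp only [hm, if_true, hA]; rfl
    · simp only [hm, if_false, hA]
      rw [Set.preimage_compl]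
      rfl
  have hfac : ∀ (T : Finset (Fin M)) m,
      (P (if m ∈ T then A m else (A m)ᶜ)).toReal
        = if m ∈ T then q m else 1 - q m := by
    intro T m
    by_cases hm : m ∈ T
    · simp [hm, hq]
    · simp only [hm, if_false, hq]
      rw [prob_compl_eq_one_sub (hAmeas m),
        ENNReal.toReal_sub_of_le prob_le_one ENNReal.one_ne_top, ENNReal.toReal_one]
  have hPEtoReal : ∀ T, (P (E T)).toReal = pvW q T := by
    intro T
    rw [hPE, ENNReal.toReal_prod]
    calc (∏ m, (P (if m ∈ T then A m else (A m)ᶜ)).toReal)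
        = ∏ m, (if m ∈ T then q m else 1 - q m) :=
          Finset.prod_congr rfl fun m _ => hfac T m
      _ = (∏ m ∈ T, (if m ∈ T then q m else 1 - q m))
            * ∏ m ∈ Tᶜ, (if m ∈ T then q m else 1 - q m) :=
          (Finset.prod_mul_prod_compl T _).symm
      _ = pvW q T := by
          rw [pvW]
          congr 1
          · exact Finset.prod_congr rfl fun m hm => by simp [hm]
          · exact Finset.prod_congr rfl fun m hm => by
              simp [Finset.mem_compl.1 hm]
  -- the union event
  set Ecount : Set Ω :=
    {ω | t ≤ (Finset.univ.filter (fun m : Fin M => istar ∈ S m ω)).card} with hEc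
  have hEU : Ecount = ⋃ T ∈ Finset.univ.filter
      (fun T : Finset (Fin M) => t ≤ T.card), E T := by
    ext ω
    simp only [hEc, hE, Set.mem_setOf_eq, Set.mem_iUnion, Finset.mem_filter,
      Finset.mem_univ, true_and, exists_prop]
    constructor
    · intro h; exact ⟨_, h, rfl⟩
    · rintro ⟨T, hT, hTe⟩
      rw [hTe]; exact hT
  have hdisj : Set.PairwiseDisjoint
      ↑(Finset.univ.filter (fun T : Finset (Fin M) => t ≤ T.card)) E := by
    intro T₁ _ T₂ _ hne
    simp only [Function.onFun, Set.disjoint_left]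
    intro ω hω1 hω2
    simp only [hE, Set.mem_setOf_eq] at hω1 hω2
    exact hne (hω1 ▸ hω2 ▸ rfl)
  have hPcount : (P Ecount).toReal = pvF t q := by
    rw [hEU, measure_biUnion_finset hdisj (fun T _ => hEmeas T),
      ENNReal.toReal_sum (fun T _ => measure_ne_top P _)]
    exact Finset.sum_congr rfl fun T _ => hPEtoReal T
  -- bad event
  set bad : Set Ω := {ω | ¬ ∀ m : Fin M, (S m ω).card ≤ k} with hbadDef
  have hbad : P bad = 0 := by
    have hae : ∀ᵐ ω ∂P, ∀ m : Fin M, (S m ω).card ≤ k :=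
      (MeasureTheory.ae_all_iff).2 hcard
    simp only [hbadDef]
    exact MeasureTheory.ae_iff.mp hae
  set target : Set Ω := {ω |
      (Finset.univ.filter (fun j : Fin d =>
          (Finset.univ.filter (fun m : Fin M => istar ∈ S m ω)).card
            < (Finset.univ.filter (fun m : Fin M => j ∈ S m ω)).card)).card
        ≤ 2 * k - 1} with htarget
  have hsub : Ecount ⊆ target ∪ bad := by
    intro ω hω
    simp only [hEc, Set.mem_setOf_eq] at hω
    by_cases hg : ∀ m : Fin M, (S m ω).card ≤ k
    · left
      show ω ∈ target
      simp only [htarget, Set.mem_setOf_eq]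
      exact pv_count_lemma hk istar (fun m => S m ω) hg hω
    · right
      show ω ∈ bad
      simp only [hbadDef, Set.mem_setOf_eq]
      exact hg
  calc ∑ m ∈ Finset.Icc t M, (M.choose m : ℝ) * p ^ m * (1 - p) ^ (M - m)
      = pvF t (fun _ : Fin M => p) := (pvF_const t p).symm
    _ ≤ pvF t q := pvF_const_le t p hp0 q hpq hq1
    _ = (P Ecount).toReal := hPcount.symm
    _ ≤ (P target).toReal := by
        refine ENNReal.toReal_mono (measure_ne_top P _) ?_
        calc P Ecount ≤ P (target ∪ bad) := measure_mono hsub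
          _ ≤ P target + P bad := measure_union_le _ _
          _ = P target := by rw [hbad, add_zero]
end

section
/- If an index i* ∈ {1,…,d} satisfies V(i*) ≥ ⌊M/2⌋ + 1 (i.e., a strict majority of the M machines select i*), then the number of indices j with V(j) ≥ ⌊M/2⌋ + 1 is at most 2k − 1; consequently at most 2k − 1 indices j satisfy V(j) ≥ V(i*), so i* is contained in the set of 2k indices with largest vote counts. -/
/-- **Global-voting correctness (proof of Theorem 1 of the PV-Tree paper).**
Let `S 1, …, S M` be subsets of `{1,…,d}`, each of cardinality at most `k`, and
let `V j = #{m : j ∈ S m}`. If an index `i*` satisfies `V i* ≥ ⌊M/2⌋ + 1`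
(a strict majority of the machines select `i*`), then the number of indices `j`
with `V j ≥ ⌊M/2⌋ + 1` is at most `2k − 1`; consequently at most `2k − 1` indices
`j` satisfy `V j ≥ V i*`, so `i*` is among the `2k` indices with largest vote
counts. -/
theorem pvtree_majority_global_voting
    (M d k : ℕ) (hM : 0 < M) (hd : 0 < d) (hk : 0 < k)
    (S : Fin M → Finset (Fin d)) (hcard : ∀ m, (S m).card ≤ k)
    (istar : Fin d)
    (hmaj : M / 2 + 1 ≤ (Finset.univ.filter (fun m : Fin M => istar ∈ S m)).card) :
    (Finset.univ.filter (fun j : Fin d =>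
        M / 2 + 1 ≤ (Finset.univ.filter (fun m : Fin M => j ∈ S m)).card)).card
      ≤ 2 * k - 1 ∧
    (Finset.univ.filter (fun j : Fin d =>
        (Finset.univ.filter (fun m : Fin M => istar ∈ S m)).card
          ≤ (Finset.univ.filter (fun m : Fin M => j ∈ S m)).card)).card
      ≤ 2 * k - 1 := by
  classical
  set A := Finset.univ.filter (fun j : Fin d =>
      M / 2 + 1 ≤ (Finset.univ.filter (fun m : Fin M => j ∈ S m)).card) with hA
  have key : ∑ j : Fin d, (Finset.univ.filter (fun m : Fin M => j ∈ S m)).card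
      = ∑ m : Fin M, (S m).card := by
    simp_rw [Finset.card_filter]
    rw [Finset.sum_comm]
    simp
  have htot : ∑ j : Fin d, (Finset.univ.filter (fun m : Fin M => j ∈ S m)).card
      ≤ M * k := by
    rw [key]
    calc ∑ m : Fin M, (S m).card ≤ ∑ _m : Fin M, k :=
          Finset.sum_le_sum fun m _ => hcard m
      _ = M * k := by simp [mul_comm]
  have hlow : A.card * (M / 2 + 1)
      ≤ ∑ j ∈ A, (Finset.univ.filter (fun m : Fin M => j ∈ S m)).card := by
    simpa [smul_eq_mul] using
      Finset.card_nsmul_le_sum A _ _ (fun j hj => (Finset.mem_filter.mp hj).2)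
  have hsub : ∑ j ∈ A, (Finset.univ.filter (fun m : Fin M => j ∈ S m)).card
      ≤ ∑ j : Fin d, (Finset.univ.filter (fun m : Fin M => j ∈ S m)).card :=
    Finset.sum_le_sum_of_subset (Finset.subset_univ A)
  have hM2 : M ≤ 2 * (M / 2) + 1 := by omega
  have hchain := le_trans (le_trans hlow hsub) htot
  have h1 : A.card ≤ 2 * k - 1 := by
    by_contra hcon
    push_neg at hcon
    have h2k : 2 * k ≤ A.card := by omega
    nlinarith [hchain, hM2, hk, h2k]
  refine ⟨h1, le_trans (Finset.card_le_card ?_) h1⟩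
  intro j hj
  simp only [Finset.mem_filter, Finset.mem_univ, true_and, hA] at hj ⊢
  exact le_trans hmaj hj
end

section
/- Let (Ω, P) be a probability space and let a_1, …, a_d be real random variables (the empirical informativeness scores). Suppose P( |a_j − b(j)| > l_j ) ≤ δ_j for every j ∉ T and P( |a_{i*} − b(i*)| > l* ) ≤ δ*. Then with probability at least 1 − δ* − Σ_{j∉T} δ_j, at most k−1 indices j ∈ {1,…,d} satisfy a_j > a_{i*}; i.e., the most informative attribute i* is among the top-k indices of the empirical scores. -/
open scoped Classical

open MeasureTheory

/-- **Probabilistic local-voting guarantee (proof of Theorem 1, PV-Tree paper).**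
Let `b : {1,…,d} → ℝ` be the population informativeness scores, `i*` a maximizer
of `b`, and `T` a top-`k` set for `b` containing `i*` (with `k < d`). For `j ∉ T`
let `l j = (b i* − b j)/2` and `l* = min_{j ∉ T} l j`. Let `a 1, …, a d` be real
random variables (the empirical scores) with `P(|a j − b j| > l j) ≤ δ j` for
every `j ∉ T` and `P(|a i* − b i*| > l*) ≤ δ*`. Then with probability at least
`1 − δ* − Σ_{j ∉ T} δ j`, at most `k − 1` indices `j` satisfy `a j > a i*`,
i.e. `i*` is among the top-`k` indices of the empirical scores. -/
theorem pvtree_local_voting_probability_bound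
    {Ω : Type*} [MeasurableSpace Ω] (P : Measure Ω) [IsProbabilityMeasure P]
    (d k : ℕ) (hk : 0 < k) (hkd : k < d)
    (b : Fin d → ℝ) (istar : Fin d)
    (hmax : ∀ j, b j ≤ b istar)
    (T : Finset (Fin d)) (hTcard : T.card = k) (hiT : istar ∈ T)
    (hTtop : ∀ j ∈ T, ∀ j' ∉ T, b j' ≤ b j)
    (a : Fin d → Ω → ℝ)
    (δ : Fin d → ℝ) (δstar : ℝ)
    (hδ : ∀ j ∉ T, (P {ω | (b istar - b j) / 2 < |a j ω - b j|}).toReal ≤ δ j)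
    (hδstar : (P {ω |
        Tᶜ.inf' (Finset.card_pos.mp (by
            rw [Finset.card_compl, hTcard, Fintype.card_fin]; omega))
          (fun j => (b istar - b j) / 2)
        < |a istar ω - b istar|}).toReal ≤ δstar) :
    1 - δstar - ∑ j ∈ Tᶜ, δ j
      ≤ (P {ω |
          (Finset.univ.filter (fun j : Fin d => a istar ω < a j ω)).card
            ≤ k - 1}).toReal := by

  have hTc : Tᶜ.Nonempty := Finset.card_pos.mp (by
    rw [Finset.card_compl, hTcard, Fintype.card_fin]; omega)
  set l : Fin d → ℝ := fun j => (b istar - b j) / 2 with hl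
  set lstar : ℝ := Tᶜ.inf' hTc l with hls
  set Bs : Set Ω := {ω | lstar < |a istar ω - b istar|} with hBs
  set B : Fin d → Set Ω := fun j => {ω | l j < |a j ω - b j|} with hB
  set Good : Set Ω := {ω | |a istar ω - b istar| ≤ lstar ∧ ∀ j ∉ T, |a j ω - b j| ≤ l j}
    with hGood
  -- Good implies the target event
  have hsub : Good ⊆ {ω | (Finset.univ.filter (fun j : Fin d => a istar ω < a j ω)).card ≤ k - 1} := by
    intro ω hω
    obtain ⟨h1, h2⟩ := hω
    have hfil : (Finset.univ.filter (fun j : Fin d => a istar ω < a j ω)) ⊆ T.erase istar := by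
      intro j hj
      rw [Finset.mem_filter] at hj
      have hlt : a istar ω < a j ω := hj.2
      have hne : j ≠ istar := by
        rintro rfl; exact lt_irrefl _ hlt
      rw [Finset.mem_erase]
      refine ⟨hne, ?_⟩
      by_contra hjT
      have hbj := h2 j hjT
      have hlle : lstar ≤ l j := Finset.inf'_le l (Finset.mem_compl.mpr hjT)
      have h1' := abs_le.mp h1
      have hbj' := abs_le.mp hbj
      have : a j ω ≤ a istar ω := by
        simp only [hl] at hlle hbj' ⊢
        linarith [h1'.1, h1'.2, hbj'.1, hbj'.2]
      exact absurd hlt (not_lt.mpr this)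
    calc (Finset.univ.filter (fun j : Fin d => a istar ω < a j ω)).card
        ≤ (T.erase istar).card := Finset.card_le_card hfil
      _ = k - 1 := by rw [Finset.card_erase_of_mem hiT, hTcard]
  -- complement of Good is covered by the bad events
  have hcov : Goodᶜ ⊆ Bs ∪ ⋃ j ∈ Tᶜ, B j := by
    intro ω hω
    simp only [hGood, Set.mem_compl_iff, Set.mem_setOf_eq, not_and, not_forall, not_le] at hω
    by_cases hs : |a istar ω - b istar| ≤ lstar
    · obtain ⟨j, hjT, hjlt⟩ := hω hs
      exact Or.inr (Set.mem_biUnion (Finset.mem_compl.mpr hjT) hjlt)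
    · exact Or.inl (not_le.mp hs)
  have hmeas : (P Goodᶜ) ≤ P Bs + ∑ j ∈ Tᶜ, P (B j) := by
    refine le_trans (measure_mono hcov) ?_
    refine le_trans (measure_union_le _ _) (add_le_add le_rfl ?_)
    exact measure_biUnion_finset_le _ _
  have hfin : ∀ s : Set Ω, P s ≠ ⊤ := fun s => measure_ne_top P s
  have htR : (P Goodᶜ).toReal ≤ δstar + ∑ j ∈ Tᶜ, δ j := by
    have h1 : (P Goodᶜ).toReal ≤ (P Bs + ∑ j ∈ Tᶜ, P (B j)).toReal := by
      refine ENNReal.toReal_mono ?_ hmeas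
      refine ENNReal.add_ne_top.mpr ⟨hfin _, ?_⟩
      exact (ENNReal.sum_lt_top.mpr (fun j _ => (hfin _).lt_top)).ne
    have h2 : (P Bs + ∑ j ∈ Tᶜ, P (B j)).toReal
        = (P Bs).toReal + ∑ j ∈ Tᶜ, (P (B j)).toReal := by
      rw [ENNReal.toReal_add (hfin _) (ENNReal.sum_lt_top.mpr (fun j _ => (hfin _).lt_top)).ne,
        ENNReal.toReal_sum (fun j _ => hfin _)]
    refine le_trans h1 (le_of_eq h2 |>.trans ?_)
    refine add_le_add hδstar (Finset.sum_le_sum ?_)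
    intro j hj
    exact hδ j (Finset.mem_compl.mp hj)
  have hcompl : (1 : ℝ) ≤ (P Good).toReal + (P Goodᶜ).toReal := by
    have : (1 : ENNReal) ≤ P Good + P Goodᶜ := by
      calc (1 : ENNReal) = P Set.univ := (measure_univ).symm
        _ = P (Good ∪ Goodᶜ) := by rw [Set.union_compl_self]
        _ ≤ P Good + P Goodᶜ := measure_union_le _ _
    have h := ENNReal.toReal_mono (ENNReal.add_ne_top.mpr ⟨hfin _, hfin _⟩) this
    rwa [ENNReal.toReal_one, ENNReal.toReal_add (hfin _) (hfin _)] at h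
  have hmono : (P Good).toReal ≤ (P {ω | (Finset.univ.filter (fun j : Fin d => a istar ω < a j ω)).card ≤ k - 1}).toReal :=
    ENNReal.toReal_mono (hfin _) (measure_mono hsub)
  linarith
end
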